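/- Let α be Hölder continuous on [0,1] and Γ continuous positive. Define, for 0 ≤ s < t ≤ 1, V^α_{s,t} = ∫_s^t Γ(u) e^{2∫_u^t α(v)dv} du, and for each N the product J_N = Π_{k=0}^{2^N−1} √(V^α_{k2^{−N},(k+1)2^{−N}} / V^0_{k2^{−N},(k+1)2^{−N}}). Then lim_{N→∞} J_N = exp(½ ∫₀¹ α(t) dt). -/

import Mathlib

open MeasureTheory Filter intervalIntegral Set Topology

noncomputable section

/-- `V^a_{s,t} = ∫_s^t Γ(u) e^{2∫_u^t a(v)dv} du`. -/
def Vquad (a Γ : ℝ → ℝ) (s t : ℝ) : ℝ :=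
  ∫ u in s..t, Γ u * Real.exp (2 * ∫ v in u..t, a v)

lemma abs_log_one_add_le {x : ℝ} (hx : |x| ≤ 1/2) : |Real.log (1 + x)| ≤ 2 * |x| := by
  have hx1 : -(1/2) ≤ x := (abs_le.1 hx).1
  have hx2 : x ≤ 1/2 := (abs_le.1 hx).2
  have hpos : 0 < 1 + x := by linarith
  rw [abs_le]
  constructor
  · have h1 : 1 - (1+x)⁻¹ ≤ Real.log (1+x) := Real.one_sub_inv_le_log_of_pos hpos
    have h2 : 1 - (1+x)⁻¹ = x / (1+x) := by field_simp; ring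
    have h3 : -(2*|x|) ≤ x / (1+x) := by
      rw [le_div_iff₀ hpos]
      rcases le_or_gt 0 x with h | h
      · rw [abs_of_nonneg h]; nlinarith
      · rw [abs_of_neg h]; nlinarith
    linarith [h2 ▸ h1]
  · have h1 := Real.log_le_sub_one_of_pos hpos
    have h2 : x ≤ |x| := le_abs_self x
    linarith [abs_nonneg x]

lemma holder_continuousOn {α : ℝ → ℝ} {δ C : ℝ} (hδ : 0 < δ)
    (hH : ∀ s ∈ Icc (0:ℝ) 1, ∀ t ∈ Icc (0:ℝ) 1, |α t - α s| ≤ C * |t - s| ^ δ) :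
    ContinuousOn α (Icc 0 1) := by
  intro x hx
  have hinner : ContinuousAt (fun t : ℝ => |t - x|) x :=
    (continuous_abs.comp (continuous_id.sub continuous_const)).continuousAt
  have houter : ContinuousAt (fun z : ℝ => z ^ δ) (|x - x|) := by
    simpa using Real.continuousAt_rpow_const 0 δ (Or.inr hδ.le)
  have h1 : ContinuousAt (fun t : ℝ => C * |t - x| ^ δ) x := by
    apply continuousAt_const.mul
    exact ContinuousAt.comp (g := fun z : ℝ => z ^ δ) houter hinner
  have h0 : Tendsto (fun t => C * |t - x| ^ δ) (nhdsWithin x (Icc 0 1)) (𝓝 0) := by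
    have := (h1.continuousWithinAt (s := Icc 0 1))
    rw [ContinuousWithinAt] at this
    simpa [Real.zero_rpow hδ.ne'] using this
  rw [ContinuousWithinAt, ← tendsto_sub_nhds_zero_iff]
  apply squeeze_zero_norm' ?_ h0
  filter_upwards [self_mem_nhdsWithin] with t ht
  simpa [Real.norm_eq_abs] using hH x hx t ht

lemma Acont {α : ℝ → ℝ} (hαc : ContinuousOn α (Icc 0 1)) :
    ContinuousOn (fun u => ∫ v in (0:ℝ)..u, α v) (Icc (0:ℝ) 1) := by
  have h : IntegrableOn α (uIcc (0:ℝ) 1) volume := by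
    rw [uIcc_of_le zero_le_one]
    exact hαc.integrableOn_compact isCompact_Icc
  simpa [uIcc_of_le (zero_le_one : (0:ℝ) ≤ 1)] using
    intervalIntegral.continuousOn_primitive_interval h

lemma integα {α : ℝ → ℝ} (hαc : ContinuousOn α (Icc 0 1)) {u w : ℝ}
    (hu : u ∈ Icc (0:ℝ) 1) (hw : w ∈ Icc (0:ℝ) 1) :
    IntervalIntegrable α volume u w :=
  (hαc.mono (uIcc_subset_Icc hu hw)).intervalIntegrable

lemma Aeq {α : ℝ → ℝ} (hαc : ContinuousOn α (Icc 0 1)) {u w : ℝ}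
    (hu : u ∈ Icc (0:ℝ) 1) (hw : w ∈ Icc (0:ℝ) 1) :
    (∫ v in u..w, α v) = (∫ v in (0:ℝ)..w, α v) - ∫ v in (0:ℝ)..u, α v :=
  (integral_interval_sub_left (integα hαc (by norm_num) hw) (integα hαc (by norm_num) hu)).symm


section
variable {α Γ : ℝ → ℝ} {M γ : ℝ}

lemma Vquad_rw (hαc : ContinuousOn α (Icc 0 1)) {s t : ℝ}
    (hs : 0 ≤ s) (hst : s ≤ t) (ht : t ≤ 1) :
    Vquad α Γ s t = ∫ u in s..t,
      Γ u * Real.exp (2 * ((∫ v in (0:ℝ)..t, α v) - ∫ v in (0:ℝ)..u, α v)) := by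
  apply integral_congr
  intro u hu
  rw [uIcc_of_le hst] at hu
  have hu1 : u ∈ Icc (0:ℝ) 1 := ⟨hs.trans hu.1, hu.2.trans ht⟩
  dsimp only
  rw [Aeq hαc hu1 ⟨hs.trans hst, ht⟩]

lemma V0_rw {s t : ℝ} : Vquad (fun _ => 0) Γ s t = ∫ u in s..t, Γ u := by
  apply integral_congr
  intro u _
  simp

lemma Vpos (hγ : 0 < γ) (hαc : ContinuousOn α (Icc 0 1)) (hΓc : ContinuousOn Γ (Icc 0 1))
    (hM : ∀ t ∈ Icc (0:ℝ) 1, |α t| ≤ M)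
    (hγle : ∀ t ∈ Icc (0:ℝ) 1, γ ≤ Γ t)
    {s t : ℝ} (hs : 0 ≤ s) (hst : s < t) (ht : t ≤ 1) :
    0 < Vquad α Γ s t ∧ 0 < Vquad (fun _ => 0) Γ s t := by
  have hsub : Icc s t ⊆ Icc (0:ℝ) 1 := Icc_subset_Icc hs ht
  have hIcc : uIcc s t = Icc s t := uIcc_of_le hst.le
  have hIΓ : IntervalIntegrable Γ volume s t :=
    (hΓc.mono (hIcc ▸ hsub)).intervalIntegrable
  have htI : t ∈ Icc (0:ℝ) 1 := ⟨hs.trans hst.le, ht⟩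
  have hM0 : 0 ≤ M := (abs_nonneg _).trans (hM 0 (by norm_num))
  constructor
  · rw [Vquad_rw hαc hs hst.le ht]
    set A : ℝ → ℝ := fun u => ∫ v in (0:ℝ)..u, α v with hA
    have hAc : ContinuousOn A (Icc 0 1) := Acont hαc
    have hcont : ContinuousOn (fun u => Γ u * Real.exp (2 * (A t - A u))) (Icc s t) := by
      apply (hΓc.mono hsub).mul
      apply Real.continuous_exp.comp_continuousOn
      exact (continuousOn_const.mul (continuousOn_const.sub (hAc.mono hsub)))
    have hlow : ∀ u ∈ Icc s t, γ * Real.exp (-(2*M)) ≤ Γ u * Real.exp (2 * (A t - A u)) := by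
      intro u hu
      have hu1 : u ∈ Icc (0:ℝ) 1 := hsub hu
      have h1 : |A t - A u| ≤ M * |t - u| := by
        rw [show A t - A u = ∫ v in u..t, α v from (Aeq hαc hu1 htI).symm,
          ← Real.norm_eq_abs]
        apply intervalIntegral.norm_integral_le_of_norm_le_const
        intro v hv
        have hv' : v ∈ Icc (0:ℝ) 1 := (uIcc_subset_Icc hu1 htI) (uIoc_subset_uIcc hv)
        simpa [Real.norm_eq_abs] using hM v hv'
      have h2 : |t - u| ≤ 1 := by
        rw [abs_of_nonneg (by linarith [hu.2])]
        have := hu1.1; linarith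
      have h3 : -(2*M) ≤ 2 * (A t - A u) := by
        have := (abs_le.1 h1).1
        nlinarith [abs_nonneg (t - u)]
      have h4 : Real.exp (-(2*M)) ≤ Real.exp (2 * (A t - A u)) := Real.exp_le_exp.2 h3
      have := hγle u hu1
      nlinarith [Real.exp_pos (-(2*M)), Real.exp_pos (2 * (A t - A u))]
    have := integral_mono_on hst.le (_root_.intervalIntegrable_const (μ := volume) (c := γ * Real.exp (-(2*M))))
      ((hIcc ▸ hcont).intervalIntegrable) hlow
    rw [intervalIntegral.integral_const, smul_eq_mul] at this
    have hpos : 0 < (t - s) * (γ * Real.exp (-(2*M))) := by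
      have : 0 < t - s := by linarith
      positivity
    linarith
  · rw [V0_rw]
    have := integral_mono_on hst.le (_root_.intervalIntegrable_const (μ := volume) (c := γ)) hIΓ
      (fun x hx => hγle x (hsub hx))
    rw [intervalIntegral.integral_const, smul_eq_mul] at this
    have hpos : 0 < (t - s) * γ := by
      have : 0 < t - s := by linarith
      positivity
    linarith

end

lemma key (α Γ : ℝ → ℝ) (δ C M B γ ε₁ : ℝ)
    (hδ : 0 < δ) (hC : 0 ≤ C) (hM0 : 0 ≤ M) (hB0 : 0 ≤ B) (hγ : 0 < γ) (hε₁ : 0 ≤ ε₁)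
    (hM : ∀ t ∈ Icc (0:ℝ) 1, |α t| ≤ M)
    (hαc : ContinuousOn α (Icc 0 1))
    (hΓc : ContinuousOn Γ (Icc 0 1))
    (hB : ∀ t ∈ Icc (0:ℝ) 1, |Γ t| ≤ B)
    (hγle : ∀ t ∈ Icc (0:ℝ) 1, γ ≤ Γ t)
    (hH : ∀ s ∈ Icc (0:ℝ) 1, ∀ t ∈ Icc (0:ℝ) 1, |α t - α s| ≤ C * |t - s| ^ δ)
    (s t : ℝ) (hs : 0 ≤ s) (hst : s < t) (ht : t ≤ 1)
    (hω : ∀ u ∈ Icc s t, |Γ u - Γ s| ≤ ε₁)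
    (hMh : M * (t - s) ≤ 1)
    (hE : (B*M^2*(t-s) + ε₁*M + B*C*(t-s)^δ) * (t-s) / γ ≤ 1/2) :
    |Real.log (Vquad α Γ s t / Vquad (fun _ => 0) Γ s t) - ∫ v in s..t, α v|
      ≤ 2 * ((B*M^2*(t-s) + ε₁*M + B*C*(t-s)^δ) * (t-s)) / γ := by
  have hh0 : 0 < t - s := by linarith
  have hsI : s ∈ Icc (0:ℝ) 1 := ⟨hs, by linarith⟩
  have htI : t ∈ Icc (0:ℝ) 1 := ⟨by linarith, ht⟩
  have hsub : Icc s t ⊆ Icc (0:ℝ) 1 := Icc_subset_Icc hs ht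
  have hIcc : uIcc s t = Icc s t := uIcc_of_le hst.le
  have hIoc : uIoc s t = Ioc s t := uIoc_of_le hst.le
  set A : ℝ → ℝ := fun u => ∫ v in (0:ℝ)..u, α v with hA
  have hAc : ContinuousOn A (Icc 0 1) := Acont hαc
  set g : ℝ → ℝ := fun u => (A t - A u) - (A u - A s) with hgdef
  set φ : ℝ → ℝ := fun u => α s * ((t - u) - (u - s)) with hφdef
  have hgc : ContinuousOn g (Icc s t) := by
    apply ContinuousOn.sub
    · exact continuousOn_const.sub (hAc.mono hsub)
    · exact (hAc.mono hsub).sub continuousOn_const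
  have hφc : ContinuousOn φ (Icc s t) :=
    (continuous_const.mul ((continuous_const.sub continuous_id).sub
      (continuous_id.sub continuous_const))).continuousOn
  have hΓc' : ContinuousOn Γ (Icc s t) := hΓc.mono hsub
  -- bound on the primitive increments
  have hAinc : ∀ u ∈ Icc (0:ℝ) 1, ∀ w ∈ Icc (0:ℝ) 1, |A w - A u| ≤ M * |w - u| := by
    intro u hu w hw
    rw [show A w - A u = ∫ v in u..w, α v from (Aeq hαc hu hw).symm, ← Real.norm_eq_abs]
    apply intervalIntegral.norm_integral_le_of_norm_le_const
    intro v hv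
    have hv' : v ∈ Icc (0:ℝ) 1 := (uIcc_subset_Icc hu hw) (uIoc_subset_uIcc hv)
    simpa [Real.norm_eq_abs] using hM v hv'
  have hgb : ∀ u ∈ Icc s t, |g u| ≤ M * (t - s) := by
    intro u hu
    have hu1 : u ∈ Icc (0:ℝ) 1 := hsub hu
    have h1 := hAinc u hu1 t htI
    have h2 := hAinc s hsI u hu1
    have e1 : |t - u| = t - u := abs_of_nonneg (by linarith [hu.2])
    have e2 : |u - s| = u - s := abs_of_nonneg (by linarith [hu.1])
    rw [e1] at h1; rw [e2] at h2
    calc |g u| ≤ |A t - A u| + |A u - A s| := abs_sub _ _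
      _ ≤ M * (t - u) + M * (u - s) := by linarith
      _ = M * (t - s) := by ring
  -- rewrite Vα
  have hV0rw : Vquad (fun _ => 0) Γ s t = ∫ u in s..t, Γ u := V0_rw
  have hIΓ : IntervalIntegrable Γ volume s t := (hIcc ▸ hΓc').intervalIntegrable
  have hV0low : γ * (t - s) ≤ ∫ u in s..t, Γ u := by
    have := integral_mono_on hst.le (_root_.intervalIntegrable_const (μ := volume) (c := γ)) hIΓ
      (fun x hx => hγle x (hsub hx))
    rw [intervalIntegral.integral_const, smul_eq_mul] at this
    linarith
  have hV0pos : 0 < ∫ u in s..t, Γ u := lt_of_lt_of_le (by positivity) hV0low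
  have hexpgc : ContinuousOn (fun u => Γ u * Real.exp (g u)) (Icc s t) :=
    hΓc'.mul (Real.continuous_exp.comp_continuousOn hgc)
  have hVeq : Vquad α Γ s t = Real.exp (A t - A s) * ∫ u in s..t, Γ u * Real.exp (g u) := by
    unfold Vquad
    rw [← intervalIntegral.integral_const_mul]
    apply integral_congr
    intro u hu
    rw [hIcc] at hu
    have hu1 : u ∈ Icc (0:ℝ) 1 := hsub hu
    dsimp only
    rw [show (∫ v in u..t, α v) = A t - A u from Aeq hαc hu1 htI,
      show (2 : ℝ) * (A t - A u) = (A t - A s) + g u by simp only [hgdef]; ring,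
      Real.exp_add]
    ring
  set W : ℝ := ∫ u in s..t, Γ u * Real.exp (g u) with hWdef
  -- decomposition of W - ∫ Γ
  set f₁ : ℝ → ℝ := fun u => Γ u * (Real.exp (g u) - 1 - g u) with hf₁def
  set f₂ : ℝ → ℝ := fun u => (Γ u - Γ s) * φ u with hf₂def
  set f₃ : ℝ → ℝ := fun u => Γ u * (g u - φ u) with hf₃def
  set f₀ : ℝ → ℝ := fun u => Γ s * φ u with hf₀def
  have hf₁c : ContinuousOn f₁ (Icc s t) :=
    hΓc'.mul (((Real.continuous_exp.comp_continuousOn hgc).sub continuousOn_const).sub hgc)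
  have hf₂c : ContinuousOn f₂ (Icc s t) := (hΓc'.sub continuousOn_const).mul hφc
  have hf₃c : ContinuousOn f₃ (Icc s t) := hΓc'.mul (hgc.sub hφc)
  have hf₀c : ContinuousOn f₀ (Icc s t) := continuousOn_const.mul hφc
  have hf₁i : IntervalIntegrable f₁ volume s t := (hIcc ▸ hf₁c).intervalIntegrable
  have hf₂i : IntervalIntegrable f₂ volume s t := (hIcc ▸ hf₂c).intervalIntegrable
  have hf₃i : IntervalIntegrable f₃ volume s t := (hIcc ▸ hf₃c).intervalIntegrable
  have hf₀i : IntervalIntegrable f₀ volume s t := (hIcc ▸ hf₀c).intervalIntegrable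
  have hWi : IntervalIntegrable (fun u => Γ u * Real.exp (g u)) volume s t :=
    (hIcc ▸ hexpgc).intervalIntegrable
  have hsplit : W - (∫ u in s..t, Γ u)
      = (∫ u in s..t, f₁ u) + (∫ u in s..t, f₂ u) + (∫ u in s..t, f₃ u)
        + ∫ u in s..t, f₀ u := by
    rw [hWdef, ← integral_sub hWi hIΓ, ← integral_add hf₁i hf₂i,
      ← integral_add (hf₁i.add hf₂i) hf₃i, ← integral_add ((hf₁i.add hf₂i).add hf₃i) hf₀i]
    apply integral_congr
    intro u _
    simp only [hf₁def, hf₂def, hf₃def, hf₀def]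
    ring
  have hf₀z : (∫ u in s..t, f₀ u) = 0 := by
    have e0 : ∀ u : ℝ, f₀ u = (Γ s * α s) * ((t + s) - 2 * u) := by
      intro u; simp only [hf₀def, hφdef]; ring
    simp_rw [e0]
    rw [intervalIntegral.integral_const_mul]
    have : (∫ u in s..t, ((t + s) - 2 * u)) = 0 := by
      rw [integral_sub (_root_.intervalIntegrable_const (μ := volume) (c := t + s))
        ((continuous_mul_left (2:ℝ)).intervalIntegrable s t),
        intervalIntegral.integral_const_mul, integral_id, intervalIntegral.integral_const, smul_eq_mul]
      ring
    rw [this, mul_zero]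
  -- pointwise bounds
  have hmem : ∀ u ∈ uIoc s t, u ∈ Icc s t := by
    intro u hu; rw [hIoc] at hu; exact Ioc_subset_Icc_self hu
  have hb₁ : |∫ u in s..t, f₁ u| ≤ (B * (M * (t-s))^2) * (t - s) := by
    rw [← Real.norm_eq_abs]
    have := intervalIntegral.norm_integral_le_of_norm_le_const (C := B * (M * (t-s))^2)
      (f := f₁) (a := s) (b := t) ?_
    · rwa [abs_of_nonneg hh0.le] at this
    · intro u hu
      have hu' := hmem u hu
      have hg1 : |g u| ≤ 1 := (hgb u hu').trans hMh
      have hexp : |Real.exp (g u) - 1 - g u| ≤ (g u)^2 := Real.abs_exp_sub_one_sub_id_le hg1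
      have hg2 : (g u)^2 ≤ (M * (t-s))^2 := by
        rw [← sq_abs]
        apply pow_le_pow_left₀ (abs_nonneg _) (hgb u hu')
      rw [Real.norm_eq_abs, hf₁def]
      calc |Γ u * (Real.exp (g u) - 1 - g u)| = |Γ u| * |Real.exp (g u) - 1 - g u| := abs_mul _ _
        _ ≤ B * (M * (t-s))^2 := by
            apply mul_le_mul (hB u (hsub hu')) (hexp.trans hg2) (abs_nonneg _) hB0
  have hφb : ∀ u ∈ Icc s t, |φ u| ≤ M * (t - s) := by
    intro u hu
    have h1 : |(t - u) - (u - s)| ≤ t - s := by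
      rw [abs_le]; constructor <;> [linarith [hu.2]; linarith [hu.1]]
    simp only [hφdef]
    rw [abs_mul]
    exact mul_le_mul (hM s hsI) h1 (abs_nonneg _) hM0
  have hb₂ : |∫ u in s..t, f₂ u| ≤ (ε₁ * (M * (t-s))) * (t - s) := by
    rw [← Real.norm_eq_abs]
    have := intervalIntegral.norm_integral_le_of_norm_le_const (C := ε₁ * (M * (t-s)))
      (f := f₂) (a := s) (b := t) ?_
    · rwa [abs_of_nonneg hh0.le] at this
    · intro u hu
      have hu' := hmem u hu
      rw [Real.norm_eq_abs, hf₂def, abs_mul]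
      exact mul_le_mul (hω u hu') (hφb u hu') (abs_nonneg _) hε₁
  have hb₃ : |∫ u in s..t, f₃ u| ≤ (B * (C * (t-s)^δ * (t-s))) * (t - s) := by
    rw [← Real.norm_eq_abs]
    have := intervalIntegral.norm_integral_le_of_norm_le_const (C := B * (C * (t-s)^δ * (t-s)))
      (f := f₃) (a := s) (b := t) ?_
    · rwa [abs_of_nonneg hh0.le] at this
    · intro u hu
      have hu' := hmem u hu
      have hu1 : u ∈ Icc (0:ℝ) 1 := hsub hu'
      have hαb : ∀ v ∈ Icc s t, |α v - α s| ≤ C * (t-s)^δ := by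
        intro v hv
        have hv1 : v ∈ Icc (0:ℝ) 1 := hsub hv
        refine (hH s hsI v hv1).trans ?_
        apply mul_le_mul_of_nonneg_left ?_ hC
        apply Real.rpow_le_rpow (abs_nonneg _) ?_ hδ.le
        rw [abs_of_nonneg (by linarith [hv.1])]
        linarith [hv.2]
      have e1 : (∫ v in u..t, (α v - α s)) = (A t - A u) - α s * (t - u) := by
        rw [integral_sub (integα hαc hu1 htI)
          (_root_.intervalIntegrable_const (μ := volume) (c := α s)),
          intervalIntegral.integral_const, smul_eq_mul,
          show (∫ v in u..t, α v) = A t - A u from Aeq hαc hu1 htI]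
        ring
      have e2 : (∫ v in s..u, (α v - α s)) = (A u - A s) - α s * (u - s) := by
        rw [integral_sub (integα hαc hsI hu1)
          (_root_.intervalIntegrable_const (μ := volume) (c := α s)),
          intervalIntegral.integral_const, smul_eq_mul,
          show (∫ v in s..u, α v) = A u - A s from Aeq hαc hsI hu1]
        ring
      have e3 : g u - φ u = (∫ v in u..t, (α v - α s)) - ∫ v in s..u, (α v - α s) := by
        rw [e1, e2]
        simp only [hgdef, hφdef]
        ring
      have hI1 : |∫ v in u..t, (α v - α s)| ≤ (C * (t-s)^δ) * |t - u| := by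
        rw [← Real.norm_eq_abs]
        apply intervalIntegral.norm_integral_le_of_norm_le_const
        intro v hv
        have hv' : v ∈ Icc s t := by
          have : v ∈ uIcc u t := uIoc_subset_uIcc hv
          rw [uIcc_of_le hu'.2] at this
          exact ⟨hu'.1.trans this.1, this.2⟩
        simpa [Real.norm_eq_abs] using hαb v hv'
      have hI2 : |∫ v in s..u, (α v - α s)| ≤ (C * (t-s)^δ) * |u - s| := by
        rw [← Real.norm_eq_abs]
        apply intervalIntegral.norm_integral_le_of_norm_le_const
        intro v hv
        have hv' : v ∈ Icc s t := by
          have : v ∈ uIcc s u := uIoc_subset_uIcc hv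
          rw [uIcc_of_le hu'.1] at this
          exact ⟨this.1, this.2.trans hu'.2⟩
        simpa [Real.norm_eq_abs] using hαb v hv'
      rw [show |t - u| = t - u from abs_of_nonneg (by linarith [hu'.2])] at hI1
      rw [show |u - s| = u - s from abs_of_nonneg (by linarith [hu'.1])] at hI2
      have hgφ : |g u - φ u| ≤ C * (t-s)^δ * (t - s) := by
        calc |g u - φ u| ≤ |∫ v in u..t, (α v - α s)| + |∫ v in s..u, (α v - α s)| := by
              rw [e3]; exact abs_sub _ _
          _ ≤ (C * (t-s)^δ) * (t - u) + (C * (t-s)^δ) * (u - s) := add_le_add hI1 hI2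
          _ = C * (t-s)^δ * (t - s) := by ring
      rw [Real.norm_eq_abs, hf₃def, abs_mul]
      exact mul_le_mul (hB u hu1) hgφ (abs_nonneg _) hB0
  -- assemble
  set V0 : ℝ := ∫ u in s..t, Γ u with hV0def
  set Q : ℝ := B*M^2*(t-s) + ε₁*M + B*C*(t-s)^δ with hQdef
  have hrpow0 : (0:ℝ) ≤ (t-s)^δ := Real.rpow_nonneg hh0.le δ
  have hQ0 : 0 ≤ Q := by
    have : (0:ℝ) ≤ B*M^2*(t-s) := by positivity
    have : (0:ℝ) ≤ ε₁*M := by positivity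
    have : (0:ℝ) ≤ B*C*(t-s)^δ := by positivity
    simp only [hQdef]; positivity
  have hWV0 : |W - V0| ≤ Q * (t-s) * (t-s) := by
    rw [hsplit, hf₀z, add_zero]
    calc |(∫ u in s..t, f₁ u) + (∫ u in s..t, f₂ u) + (∫ u in s..t, f₃ u)|
        ≤ |∫ u in s..t, f₁ u| + |∫ u in s..t, f₂ u| + |∫ u in s..t, f₃ u| := by
          apply (abs_add_le _ _).trans
          apply add_le_add_left (abs_add_le _ _)
      _ ≤ (B * (M * (t-s))^2) * (t - s) + (ε₁ * (M * (t-s))) * (t - s)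
            + (B * (C * (t-s)^δ * (t-s))) * (t - s) := by
          exact add_le_add (add_le_add hb₁ hb₂) hb₃
      _ = Q * (t-s) * (t-s) := by simp only [hQdef]; ring
  set η : ℝ := (W - V0) / V0 with hηdef
  have hηb : |η| ≤ Q * (t-s) / γ := by
    rw [hηdef, abs_div, abs_of_pos hV0pos]
    calc |W - V0| / V0 ≤ (Q * (t-s) * (t-s)) / (γ * (t-s)) :=
          div_le_div₀ (by positivity) hWV0 (by positivity) hV0low
      _ = Q * (t-s) / γ := by
          rw [mul_div_mul_right _ _ (ne_of_gt hh0)]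
  have hη2 : |η| ≤ 1/2 := hηb.trans (by rw [mul_div_assoc] at hE ⊢; exact hE)
  have h1η : 0 < 1 + η := by
    have := (abs_le.1 hη2).1; linarith
  have hWeta : W = V0 * (1 + η) := by
    rw [hηdef, mul_add, mul_one, mul_div_assoc', mul_comm V0 (W - V0), mul_div_assoc,
      div_self (ne_of_gt hV0pos), mul_one]; ring
  have hratio : Vquad α Γ s t / Vquad (fun _ => 0) Γ s t = Real.exp (A t - A s) * (1 + η) := by
    rw [hV0rw, hVeq, hWeta]
    rw [mul_comm V0 (1 + η), ← mul_assoc, mul_div_assoc, div_self (ne_of_gt hV0pos), mul_one]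
  have hloge : Real.log (Vquad α Γ s t / Vquad (fun _ => 0) Γ s t)
      = (A t - A s) + Real.log (1 + η) := by
    rw [hratio, Real.log_mul (Real.exp_ne_zero _) (ne_of_gt h1η), Real.log_exp]
  rw [hloge, show (∫ v in s..t, α v) = A t - A s from Aeq hαc hsI htI]
  have : |Real.log (1 + η)| ≤ 2 * |η| := abs_log_one_add_le hη2
  calc |A t - A s + Real.log (1 + η) - (A t - A s)| = |Real.log (1 + η)| := by ring_nf
    _ ≤ 2 * |η| := this
    _ ≤ 2 * (Q * (t-s) / γ) := by linarith [hηb]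
    _ = 2 * (Q * (t-s)) / γ := by ring

set_option maxHeartbeats 1000000 in
/-- For `α` Hölder continuous and `Γ` continuous positive on `[0,1]`, the products
`J_N = Π_{k<2^N} √(V^α_{k2^{−N},(k+1)2^{−N}} / V^0_{k2^{−N},(k+1)2^{−N}})` converge to
`exp(½∫₀¹ α)`. -/
theorem stmt_18 (α Γ : ℝ → ℝ)
    (hα : ∃ δ > (0:ℝ), ∃ C : ℝ, ∀ s ∈ Set.Icc (0:ℝ) 1, ∀ t ∈ Set.Icc (0:ℝ) 1,
      |α t - α s| ≤ C * |t - s| ^ δ)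
    (hΓ : ContinuousOn Γ (Set.Icc 0 1))
    (hΓpos : ∀ t ∈ Set.Icc (0:ℝ) 1, 0 < Γ t) :
    Tendsto
      (fun N : ℕ => ∏ k ∈ Finset.range (2 ^ N),
        Real.sqrt (Vquad α Γ ((k : ℝ) / 2 ^ N) (((k : ℝ) + 1) / 2 ^ N) /
          Vquad (fun _ => 0) Γ ((k : ℝ) / 2 ^ N) (((k : ℝ) + 1) / 2 ^ N)))
      atTop (nhds (Real.exp ((1 / 2) * ∫ t in (0:ℝ)..1, α t))) := by
  obtain ⟨δ, hδ, C, hH⟩ := hα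
  have h01 : (0:ℝ) ∈ Icc (0:ℝ) 1 := by norm_num
  have h11 : (1:ℝ) ∈ Icc (0:ℝ) 1 := by norm_num
  have hC : 0 ≤ C := by
    have h := hH 0 h01 1 h11
    rw [show |(1:ℝ) - 0| = 1 by norm_num, Real.one_rpow, mul_one] at h
    linarith [abs_nonneg (α 1 - α 0)]
  have hαc : ContinuousOn α (Icc 0 1) := holder_continuousOn hδ hH
  set M := |α 0| + C with hMdef
  have hM0 : 0 ≤ M := by positivity
  have hM : ∀ t ∈ Icc (0:ℝ) 1, |α t| ≤ M := by
    intro t htI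
    have h1 := hH 0 h01 t htI
    have h2 : |t - 0| ^ δ ≤ 1 := by
      rw [sub_zero]
      exact Real.rpow_le_one (abs_nonneg t) (by rw [abs_of_nonneg htI.1]; exact htI.2) hδ.le
    have h3 : |α t - α 0| ≤ C := by
      calc |α t - α 0| ≤ C * |t - 0| ^ δ := h1
        _ ≤ C * 1 := mul_le_mul_of_nonneg_left h2 hC
        _ = C := mul_one C
    calc |α t| = |α 0 + (α t - α 0)| := by ring_nf
      _ ≤ |α 0| + |α t - α 0| := abs_add_le _ _
      _ ≤ M := by rw [hMdef]; linarith
  obtain ⟨xB, hxBmem, hxBmax⟩ := isCompact_Icc.exists_isMaxOn (nonempty_Icc.2 zero_le_one) hΓ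
  set B := Γ xB with hBdef
  have hBle : ∀ t ∈ Icc (0:ℝ) 1, Γ t ≤ B := fun t htI => isMaxOn_iff.1 hxBmax t htI
  have hBabs : ∀ t ∈ Icc (0:ℝ) 1, |Γ t| ≤ B := fun t htI => by
    rw [abs_of_pos (hΓpos t htI)]; exact hBle t htI
  have hB0 : 0 ≤ B := le_trans (hΓpos 0 h01).le (hBle 0 h01)
  obtain ⟨xγ, hxγmem, hxγmin⟩ := isCompact_Icc.exists_isMinOn (nonempty_Icc.2 zero_le_one) hΓ
  set γ := Γ xγ with hγdef
  have hγ : 0 < γ := hΓpos xγ hxγmem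
  have hγle : ∀ t ∈ Icc (0:ℝ) 1, γ ≤ Γ t := fun t htI => isMinOn_iff.1 hxγmin t htI
  have hfacts : ∀ (N k : ℕ), k < 2^N →
      0 ≤ (k:ℝ)/2^N ∧ (k:ℝ)/2^N < ((k:ℝ)+1)/2^N ∧ ((k:ℝ)+1)/2^N ≤ 1
        ∧ ((k:ℝ)+1)/2^N - (k:ℝ)/2^N = (1/2:ℝ)^N := by
    intro N k hk
    have h2 : (0:ℝ) < 2^N := by positivity
    have hk1 : (k:ℝ) + 1 ≤ 2^N := by
      have : ((k+1:ℕ):ℝ) ≤ ((2^N:ℕ):ℝ) := Nat.cast_le.2 hk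
      push_cast at this
      linarith
    refine ⟨by positivity, ?_, ?_, ?_⟩
    · apply div_lt_div_of_pos_right (by linarith) h2
    · rw [div_le_one h2]; exact hk1
    · rw [div_sub_div_same, show ((k:ℝ) + 1 - k) = 1 by ring, one_div_pow]
  have hmem : ∀ (N k : ℕ), k ≤ 2^N → (k:ℝ)/2^N ∈ Icc (0:ℝ) 1 := by
    intro N k hk
    have h2 : (0:ℝ) < 2^N := by positivity
    constructor
    · positivity
    · rw [div_le_one h2]
      have : ((k:ℕ):ℝ) ≤ ((2^N:ℕ):ℝ) := Nat.cast_le.2 hk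
      push_cast at this
      linarith
  set L := ∫ t in (0:ℝ)..1, α t with hLdef
  set S : ℕ → ℝ := fun N => ∑ k ∈ Finset.range (2^N),
    Real.log (Vquad α Γ ((k:ℝ)/2^N) (((k:ℝ)+1)/2^N) /
      Vquad (fun _ => 0) Γ ((k:ℝ)/2^N) (((k:ℝ)+1)/2^N)) with hSdef
  have hprod : ∀ N : ℕ, (∏ k ∈ Finset.range (2 ^ N),
      Real.sqrt (Vquad α Γ ((k : ℝ) / 2 ^ N) (((k : ℝ) + 1) / 2 ^ N) /
        Vquad (fun _ => 0) Γ ((k : ℝ) / 2 ^ N) (((k : ℝ) + 1) / 2 ^ N)))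
      = Real.exp ((1/2) * S N) := by
    intro N
    rw [hSdef, Finset.mul_sum, Real.exp_sum]
    apply Finset.prod_congr rfl
    intro k hk
    obtain ⟨hf1, hf2, hf3, hf4⟩ := hfacts N k (Finset.mem_range.1 hk)
    have hpos := Vpos hγ hαc hΓ hM hγle hf1 hf2 hf3
    have hr : 0 < Vquad α Γ ((k:ℝ)/2^N) (((k:ℝ)+1)/2^N) /
        Vquad (fun _ => 0) Γ ((k:ℝ)/2^N) (((k:ℝ)+1)/2^N) := div_pos hpos.1 hpos.2
    rw [Real.sqrt_eq_rpow, Real.rpow_def_of_pos hr, mul_comm]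
  have hsum : ∀ N : ℕ, (∑ k ∈ Finset.range (2^N),
      ∫ v in ((k:ℝ)/2^N)..(((k:ℝ)+1)/2^N), α v) = L := by
    intro N
    have hint : ∀ k < 2^N, IntervalIntegrable α volume
        ((fun k : ℕ => (k:ℝ)/2^N) k) ((fun k : ℕ => (k:ℝ)/2^N) (k+1)) := by
      intro k hk
      exact integα hαc (hmem N k hk.le) (hmem N (k+1) hk)
    have h := intervalIntegral.sum_integral_adjacent_intervals (μ := volume) hint
    rw [Nat.cast_zero, zero_div] at h
    rw [show (((2^N:ℕ)):ℝ)/2^N = 1 by push_cast; field_simp] at h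
    rw [hLdef, ← h]
    apply Finset.sum_congr rfl
    intro k _
    congr 1
    push_cast
    ring
  have hS : Tendsto S atTop (𝓝 L) := by
    rw [Metric.tendsto_atTop]
    intro ε hε
    clear_value M B γ L S
    have hM1 : (0:ℝ) < M + 1 := by linarith
    have hε2 : (0:ℝ) < ε + 1 := by linarith
    have hBM2 : (0:ℝ) < 12*(B*M^2+1) := by nlinarith [mul_nonneg hB0 (sq_nonneg M)]
    have hBC : (0:ℝ) < 12*(B*C+1) := by nlinarith [mul_nonneg hB0 hC]
    set ε₁ := γ*ε/(12*(M+1)) with hε₁def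
    have hε₁ : 0 < ε₁ := div_pos (mul_pos hγ hε) (by linarith)
    obtain ⟨θ, hθ, hθprop⟩ := Metric.uniformContinuousOn_iff.1
      (isCompact_Icc.uniformContinuousOn_of_continuous hΓ) ε₁ hε₁
    set c := min (θ/2) (min (γ*ε/(12*(B*M^2+1))) (min ((γ*ε/(12*(B*C+1)))^((1:ℝ)/δ))
      (min (1/(M+1)) (1/(ε+1))))) with hcdef
    have hc : 0 < c := by
      refine lt_min (by linarith) (lt_min (div_pos (mul_pos hγ hε) hBM2) (lt_min
        (Real.rpow_pos_of_pos (div_pos (mul_pos hγ hε) hBC) _)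
        (lt_min (one_div_pos.2 hM1) (one_div_pos.2 hε2))))
    obtain ⟨N₀, hN₀⟩ := Metric.tendsto_atTop.1
      (tendsto_pow_atTop_nhds_zero_of_lt_one (by norm_num : (0:ℝ) ≤ 1/2) (by norm_num)) c hc
    refine ⟨N₀, fun N hN => ?_⟩
    have hhc : (1/2:ℝ)^N < c := by
      have := hN₀ N hN
      rwa [Real.dist_eq, sub_zero, abs_of_nonneg (by positivity)] at this
    set hh := (1/2:ℝ)^N with hhdef
    have hh0 : 0 < hh := by rw [hhdef]; positivity
    have hcθ : hh < θ := by
      have := hhc.trans_le (min_le_left _ _); linarith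
    have hc2 : hh ≤ γ*ε/(12*(B*M^2+1)) :=
      hhc.le.trans ((min_le_right _ _).trans (min_le_left _ _))
    have hc3 : hh ≤ (γ*ε/(12*(B*C+1)))^((1:ℝ)/δ) :=
      hhc.le.trans ((min_le_right _ _).trans ((min_le_right _ _).trans (min_le_left _ _)))
    have hc4 : hh ≤ 1/(M+1) :=
      hhc.le.trans ((min_le_right _ _).trans ((min_le_right _ _).trans
        ((min_le_right _ _).trans (min_le_left _ _))))
    have hc5 : hh ≤ 1/(ε+1) :=
      hhc.le.trans ((min_le_right _ _).trans ((min_le_right _ _).trans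
        ((min_le_right _ _).trans (min_le_right _ _))))
    -- numeric bounds
    have hq1 : B*M^2*hh ≤ γ*ε/12 := by
      have h1 : hh * (12*(B*M^2+1)) ≤ γ*ε := by
        rw [← le_div_iff₀ hBM2]; exact hc2
      nlinarith [hh0.le]
    have hq2 : ε₁*M ≤ γ*ε/12 := by
      rw [hε₁def]
      rw [div_mul_eq_mul_div, div_le_div_iff₀ (by linarith) (by norm_num : (0:ℝ) < 12)]
      nlinarith [hM0, hγ.le, hε.le, mul_pos hγ hε]
    have hq3 : B*C*hh^δ ≤ γ*ε/12 := by
      have h1 : hh^δ ≤ γ*ε/(12*(B*C+1)) := by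
        calc hh^δ ≤ ((γ*ε/(12*(B*C+1)))^((1:ℝ)/δ))^δ :=
              Real.rpow_le_rpow hh0.le hc3 hδ.le
          _ = (γ*ε/(12*(B*C+1)))^((1/δ)*δ) := by
              rw [← Real.rpow_mul (div_pos (mul_pos hγ hε) hBC).le]
          _ = γ*ε/(12*(B*C+1)) := by
              rw [one_div, inv_mul_cancel₀ hδ.ne', Real.rpow_one]
      have h2 : hh^δ * (12*(B*C+1)) ≤ γ*ε := by
        rw [← le_div_iff₀ hBC]; exact h1
      nlinarith [Real.rpow_nonneg hh0.le δ]
    have hQbound : B*M^2*hh + ε₁*M + B*C*hh^δ ≤ γ*ε/4 := by linarith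
    have hQ0 : 0 ≤ B*M^2*hh + ε₁*M + B*C*hh^δ :=
      add_nonneg (add_nonneg (mul_nonneg (mul_nonneg hB0 (sq_nonneg M)) hh0.le)
        (mul_nonneg hε₁.le hM0))
        (mul_nonneg (mul_nonneg hB0 hC) (Real.rpow_nonneg hh0.le δ))
    have hkey : ∀ k ∈ Finset.range (2^N),
        |Real.log (Vquad α Γ ((k:ℝ)/2^N) (((k:ℝ)+1)/2^N) /
            Vquad (fun _ => 0) Γ ((k:ℝ)/2^N) (((k:ℝ)+1)/2^N))
          - ∫ v in ((k:ℝ)/2^N)..(((k:ℝ)+1)/2^N), α v| ≤ (ε/2) * hh := by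
      intro k hk
      obtain ⟨hf1, hf2, hf3, hf4⟩ := hfacts N k (Finset.mem_range.1 hk)
      have hsmem : (k:ℝ)/2^N ∈ Icc (0:ℝ) 1 := ⟨hf1, by linarith [hf2.le.trans hf3]⟩
      have hω : ∀ u ∈ Icc ((k:ℝ)/2^N) (((k:ℝ)+1)/2^N), |Γ u - Γ ((k:ℝ)/2^N)| ≤ ε₁ := by
        intro u hu
        have humem : u ∈ Icc (0:ℝ) 1 := ⟨hf1.trans hu.1, hu.2.trans hf3⟩
        have hd : dist u ((k:ℝ)/2^N) < θ := by
          rw [Real.dist_eq, abs_of_nonneg (by linarith [hu.1])]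
          have := hu.2
          calc u - (k:ℝ)/2^N ≤ ((k:ℝ)+1)/2^N - (k:ℝ)/2^N := by linarith
            _ = hh := hf4
            _ < θ := hcθ
        have := hθprop u humem ((k:ℝ)/2^N) hsmem hd
        rw [Real.dist_eq] at this
        exact this.le
      have hMh : M * (((k:ℝ)+1)/2^N - (k:ℝ)/2^N) ≤ 1 := by
        rw [hf4]
        have h1 : M * hh ≤ M * (1/(M+1)) := mul_le_mul_of_nonneg_left hc4 hM0
        have h2 : M * (1/(M+1)) ≤ 1 := by
          rw [mul_one_div, div_le_one hM1]; linarith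
        linarith
      have hE : (B*M^2*(((k:ℝ)+1)/2^N - (k:ℝ)/2^N) + ε₁*M
          + B*C*(((k:ℝ)+1)/2^N - (k:ℝ)/2^N)^δ) * (((k:ℝ)+1)/2^N - (k:ℝ)/2^N) / γ ≤ 1/2 := by
        rw [hf4, div_le_iff₀ hγ]
        have h1 : (B*M^2*hh + ε₁*M + B*C*hh^δ) * hh ≤ (γ*ε/4) * (1/(ε+1)) := by
          apply mul_le_mul hQbound hc5 hh0.le (div_nonneg (mul_pos hγ hε).le (by norm_num))
        have h2 : (γ*ε/4) * (1/(ε+1)) ≤ (1/2) * γ := by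
          rw [mul_one_div, div_le_iff₀ hε2]
          nlinarith [mul_pos hγ hε]
        linarith
      have h := key α Γ δ C M B γ ε₁ hδ hC hM0 hB0 hγ hε₁.le hM hαc hΓ hBabs hγle hH
        ((k:ℝ)/2^N) (((k:ℝ)+1)/2^N) hf1 hf2 hf3 hω hMh hE
      rw [hf4] at h
      refine h.trans ?_
      rw [div_le_iff₀ hγ]
      nlinarith [hh0.le, mul_nonneg hh0.le (sub_nonneg.2 hQbound)]
    calc dist (S N) L = |S N - L| := Real.dist_eq _ _
      _ = |∑ k ∈ Finset.range (2^N),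
            (Real.log (Vquad α Γ ((k:ℝ)/2^N) (((k:ℝ)+1)/2^N) /
              Vquad (fun _ => 0) Γ ((k:ℝ)/2^N) (((k:ℝ)+1)/2^N))
            - ∫ v in ((k:ℝ)/2^N)..(((k:ℝ)+1)/2^N), α v)| := by
          rw [hSdef, ← hsum N, ← Finset.sum_sub_distrib]
      _ ≤ ∑ k ∈ Finset.range (2^N),
            |Real.log (Vquad α Γ ((k:ℝ)/2^N) (((k:ℝ)+1)/2^N) /
              Vquad (fun _ => 0) Γ ((k:ℝ)/2^N) (((k:ℝ)+1)/2^N))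
            - ∫ v in ((k:ℝ)/2^N)..(((k:ℝ)+1)/2^N), α v| :=
          Finset.abs_sum_le_sum_abs _ _
      _ ≤ ∑ _k ∈ Finset.range (2^N), (ε/2) * hh := Finset.sum_le_sum hkey
      _ = (2^N : ℕ) • ((ε/2) * hh) := by rw [Finset.sum_const, Finset.card_range]
      _ = (ε/2) * ((2:ℝ)^N * (1/2)^N) := by
          rw [nsmul_eq_mul, hhdef]; push_cast; ring
      _ = ε/2 := by rw [← mul_pow]; norm_num
      _ < ε := by linarith
  have hfinal := (Real.continuous_exp.tendsto ((1/2) * L)).comp (hS.const_mul (1/2))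
  exact hfinal.congr fun N => (hprod N).symm


end
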